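/- Let d ≥ 2 and let a, b, c be unit vectors in R^d. Let r be a random vector distributed uniformly on the unit sphere in R^d, and define sgn(x) = 1 if x ≥ 0 and sgn(x) = −1 otherwise. Then the probability that sgn(⟨a, r⟩) = sgn(⟨c, r⟩) and sgn(⟨b, r⟩) ≠ sgn(⟨c, r⟩) equals ( θ(a,b) − θ(c,a) + θ(c,b) ) / (2π), where θ(x, y) = arccos(⟨x, y⟩) denotes the angle between unit vectors x and y. -/

import Mathlib

open MeasureTheory Metric

/-- `sgn x = 1` if `x ≥ 0` and `sgn x = -1` otherwise. -/
noncomputable def sgn (x : ℝ) : ℝ := if 0 ≤ x then 1 else -1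

/-- The angle `θ(x, y) = arccos ⟨x, y⟩` between unit vectors of `ℝ^d`. -/
noncomputable def angleOf {d : ℕ} (x y : EuclideanSpace ℝ (Fin d)) : ℝ :=
  Real.arccos (inner ℝ x y : ℝ)

/-- The uniform (normalized surface) probability measure on the unit sphere of `ℝ^d`,
obtained by normalizing the surface measure induced by the Lebesgue measure. -/
noncomputable def uniformSphere (d : ℕ) :
    Measure (sphere (0 : EuclideanSpace ℝ (Fin d)) 1) :=
  ((volume : Measure (EuclideanSpace ℝ (Fin d))).toSphere Set.univ)⁻¹ •
    (volume : Measure (EuclideanSpace ℝ (Fin d))).toSphere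

open Real Set
open scoped Pointwise

lemma vol_sector {B : Set ℝ} (hB : MeasurableSet B) (hBsub : B ⊆ Ioo (-π) π) (t : ℝ) :
    volume {w : ℂ | Complex.arg w ∈ B ∧ ‖w‖ ^ 2 < t} =
      volume B * ENNReal.ofReal (t / 2) := by
  rcases le_or_gt t 0 with ht | ht
  · have h1 : {w : ℂ | Complex.arg w ∈ B ∧ ‖w‖ ^ 2 < t} = ∅ := by
      ext w
      simp only [mem_setOf_eq, mem_empty_iff_false, iff_false, not_and]
      intro _ h
      nlinarith [sq_nonneg (‖w‖)]
    rw [h1, measure_empty, ENNReal.ofReal_eq_zero.2 (by linarith), mul_zero]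
  · set ρ := Real.sqrt t with hρdef
    have hρ : 0 < ρ := Real.sqrt_pos.2 ht
    have hρsq : ρ ^ 2 = t := Real.sq_sqrt ht.le
    have hset : {w : ℂ | Complex.arg w ∈ B ∧ ‖w‖ ^ 2 < t} =
        {w : ℂ | Complex.arg w ∈ B ∧ ‖w‖ < ρ} := by
      ext w
      simp only [mem_setOf_eq]
      rw [Real.lt_sqrt (norm_nonneg w)]
    rw [hset]
    set S : Set ℂ := {w : ℂ | Complex.arg w ∈ B ∧ ‖w‖ < ρ} with hSdef
    have hmeas : MeasurableSet S := by
      have : S = Complex.arg ⁻¹' B ∩ (fun w : ℂ => ‖w‖) ⁻¹' (Iio ρ) := rfl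
      rw [this]
      exact (Complex.measurable_arg hB).inter
        (continuous_norm.measurable measurableSet_Iio)
    have hfin : volume S ≠ ⊤ := by
      have hsb : S ⊆ ball (0 : ℂ) ρ := by
        intro w hw
        rw [mem_ball_zero_iff]
        exact hw.2
      exact (lt_of_le_of_lt (measure_mono hsb) measure_ball_lt_top).ne
    have hBfin : volume B ≠ ⊤ := by
      refine (lt_of_le_of_lt (measure_mono hBsub) ?_).ne
      rw [Real.volume_Ioo]
      exact ENNReal.ofReal_lt_top
    have key := Complex.integral_comp_polarCoord_symm (S.indicator (1 : ℂ → ℝ))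
    rw [integral_indicator_one hmeas] at key
    have hsub2 : Ioo (0:ℝ) ρ ×ˢ B ⊆ polarCoord.target := by
      rw [polarCoord_target]
      exact prod_mono Ioo_subset_Ioi_self hBsub
    have hcongr : ∫ p in polarCoord.target, p.1 • S.indicator (1 : ℂ → ℝ)
        (Complex.polarCoord.symm p) =
        ∫ p in polarCoord.target, (Ioo (0:ℝ) ρ ×ˢ B).indicator (fun q => q.1) p := by
      refine setIntegral_congr_fun (polarCoord.open_target.measurableSet) fun p hp => ?_
      rw [polarCoord_target] at hp
      obtain ⟨hr, hφ⟩ := hp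
      rw [mem_Ioi] at hr
      have harg : Complex.arg (Complex.polarCoord.symm p) = p.2 := by
        rw [Complex.polarCoord_symm_apply, Complex.ofReal_cos, Complex.ofReal_sin]
        exact Complex.arg_mul_cos_add_sin_mul_I hr ⟨hφ.1, hφ.2.le⟩
      have habs : ‖(Complex.polarCoord.symm p)‖ = p.1 := by
        rw [Complex.norm_polarCoord_symm, abs_of_pos hr]
      by_cases hmem : p.2 ∈ B ∧ p.1 < ρ
      · have h1 : Complex.polarCoord.symm p ∈ S := by
          rw [hSdef, mem_setOf_eq, harg, habs]; exact hmem
        have h2 : p ∈ Ioo (0:ℝ) ρ ×ˢ B := ⟨⟨hr, hmem.2⟩, hmem.1⟩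
        rw [indicator_of_mem h1, indicator_of_mem h2, Pi.one_apply, smul_eq_mul, mul_one]
      · have h1 : Complex.polarCoord.symm p ∉ S := by
          rw [hSdef, mem_setOf_eq, harg, habs]; exact hmem
        have h2 : p ∉ Ioo (0:ℝ) ρ ×ˢ B := by
          intro h; exact hmem ⟨h.2, h.1.2⟩
        rw [indicator_of_notMem h1, indicator_of_notMem h2, smul_zero]
    rw [hcongr] at key
    rw [setIntegral_indicator (measurableSet_Ioo.prod hB),
      inter_eq_self_of_subset_right hsub2] at key
    have hprod : ∫ p in Ioo (0:ℝ) ρ ×ˢ B, (fun q : ℝ × ℝ => q.1) p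
        = (∫ x in Ioo (0:ℝ) ρ, x) * ∫ y in B, (1:ℝ) := by
      rw [Measure.volume_eq_prod, ← setIntegral_prod_mul (fun x : ℝ => x) (fun _ : ℝ => (1:ℝ))]
      simp
    have hx : (∫ x in Ioo (0:ℝ) ρ, x) = t / 2 := by
      rw [← integral_Ioc_eq_integral_Ioo, ← intervalIntegral.integral_of_le hρ.le,
        integral_id]
      rw [hρsq]; ring
    have hy : (∫ y in B, (1:ℝ)) = (volume B).toReal := by
      rw [setIntegral_const, smul_eq_mul, mul_one]; rfl
    rw [hprod, hx, hy] at key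
    rw [← ENNReal.ofReal_toReal hfin, ← measureReal_def, ← key, ENNReal.ofReal_mul (by positivity),
      ENNReal.ofReal_toReal hBfin, mul_comm]

private lemma cpos {x : ℝ} (h1 : -(π/2) < x) (h2 : x < π/2) : 0 < Real.cos x :=
  Real.cos_pos_of_mem_Ioo ⟨by linarith, h2⟩

private lemma cneg {x : ℝ} (h1 : π/2 < x) (h2 : x < 3*π/2) : Real.cos x < 0 :=
  Real.cos_neg_of_pi_div_two_lt_of_lt h1 (by linarith)

private lemma cnegneg {x : ℝ} (h1 : -(3*π/2) < x) (h2 : x < -(π/2)) : Real.cos x < 0 := by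
  rw [← Real.cos_neg]
  exact cneg (by linarith) (by linarith)

private lemma cpos2 {x : ℝ} (h1 : -(2*π) < x) (h2 : x < -(3*π/2)) : 0 < Real.cos x := by
  have hp := Real.pi_pos
  rw [← Real.cos_add_two_pi]
  exact cpos (by linarith) (by linarith)

def Blune (θ : ℝ) : Set ℝ :=
  {φ : ℝ | φ ∈ Ioo (-π) π ∧ ¬(0 ≤ Real.cos φ ↔ 0 ≤ Real.cos (φ - θ))}

lemma Blune_meas (θ : ℝ) : MeasurableSet (Blune θ) := by
  have h1 : MeasurableSet {φ : ℝ | 0 ≤ Real.cos φ} :=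
    Real.continuous_cos.measurable measurableSet_Ici
  have h2 : MeasurableSet {φ : ℝ | 0 ≤ Real.cos (φ - θ)} :=
    (Real.continuous_cos.comp (continuous_id.sub continuous_const)).measurable measurableSet_Ici
  have : Blune θ = Ioo (-π) π ∩ (({φ : ℝ | 0 ≤ Real.cos φ} ∩ {φ : ℝ | 0 ≤ Real.cos (φ - θ)}ᶜ)
      ∪ ({φ : ℝ | 0 ≤ Real.cos φ}ᶜ ∩ {φ : ℝ | 0 ≤ Real.cos (φ - θ)})) := by
    ext φ
    simp only [Blune, mem_setOf_eq, mem_inter_iff, mem_union, mem_compl_iff]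
    tauto
  rw [this]
  exact measurableSet_Ioo.inter ((h1.inter h2.compl).union (h1.compl.inter h2))

lemma Blune_subset (θ : ℝ) : Blune θ ⊆ Ioo (-π) π := fun _ h => h.1

lemma vol_Blune {θ : ℝ} (h0 : 0 < θ) (hπ : θ < π) :
    volume (Blune θ) = ENNReal.ofReal (2*θ) := by
  have hp := Real.pi_pos
  rcases le_or_gt θ (π/2) with hc | hc
  · -- θ ≤ π/2
    have hupper : Blune θ ⊆ Icc (-(π/2)) (θ - π/2) ∪ Icc (π/2) (θ + π/2) := by
      rintro φ ⟨⟨h1, h2⟩, hx⟩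
      by_contra hcon
      simp only [mem_union, mem_Icc, not_or, not_and_or, not_le] at hcon
      apply hx
      rcases hcon.1 with ha | ha <;> rcases hcon.2 with hb | hb
      · have c1 : Real.cos φ < 0 := cnegneg (by linarith) (by linarith)
        have c2 : Real.cos (φ - θ) < 0 := cnegneg (by linarith) (by linarith)
        constructor <;> intro <;> linarith
      · linarith
      · have c1 : 0 < Real.cos φ := cpos (by linarith) (by linarith)
        have c2 : 0 < Real.cos (φ - θ) := cpos (by linarith) (by linarith)
        constructor <;> intro <;> linarith
      · have c1 : Real.cos φ < 0 := cneg (by linarith) (by linarith)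
        have c2 : Real.cos (φ - θ) < 0 := cneg (by linarith) (by linarith)
        constructor <;> intro <;> linarith
    have hlower : Ioo (-(π/2)) (θ - π/2) ∪ Ioo (π/2) (θ + π/2) ⊆ Blune θ := by
      rintro φ (⟨h1, h2⟩ | ⟨h1, h2⟩)
      · refine ⟨⟨by linarith, by linarith⟩, fun hiff => ?_⟩
        have c1 : 0 < Real.cos φ := cpos h1 (by linarith)
        have c2 : Real.cos (φ - θ) < 0 := cnegneg (by linarith) (by linarith)
        linarith [hiff.mp c1.le]
      · refine ⟨⟨by linarith, by linarith⟩, fun hiff => ?_⟩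
        have c1 : Real.cos φ < 0 := cneg h1 (by linarith)
        have c2 : 0 < Real.cos (φ - θ) := cpos (by linarith) (by linarith)
        linarith [hiff.mpr c2.le]
    refine le_antisymm ?_ ?_
    · calc volume (Blune θ) ≤ volume (Icc (-(π/2)) (θ - π/2) ∪ Icc (π/2) (θ + π/2)) :=
            measure_mono hupper
        _ ≤ volume (Icc (-(π/2)) (θ - π/2)) + volume (Icc (π/2) (θ + π/2)) := measure_union_le _ _
        _ = ENNReal.ofReal (2*θ) := by
            rw [Real.volume_Icc, Real.volume_Icc, ← ENNReal.ofReal_add (by linarith) (by linarith)]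
            ring_nf
    · have hdisj : Disjoint (Ioo (-(π/2)) (θ - π/2)) (Ioo (π/2) (θ + π/2)) := by
        rw [Set.disjoint_left]
        rintro x ⟨_, h2⟩ ⟨h3, _⟩
        linarith
      calc ENNReal.ofReal (2*θ)
          = volume (Ioo (-(π/2)) (θ - π/2)) + volume (Ioo (π/2) (θ + π/2)) := by
            rw [Real.volume_Ioo, Real.volume_Ioo, ← ENNReal.ofReal_add (by linarith) (by linarith)]
            ring_nf
        _ = volume (Ioo (-(π/2)) (θ - π/2) ∪ Ioo (π/2) (θ + π/2)) :=
            (measure_union hdisj measurableSet_Ioo).symm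
        _ ≤ volume (Blune θ) := measure_mono hlower
  · -- π/2 < θ
    have hupper : Blune θ ⊆ Icc (-π) (θ - 3*π/2) ∪ Icc (-(π/2)) (θ - π/2) ∪ Icc (π/2) π := by
      rintro φ ⟨⟨h1, h2⟩, hx⟩
      by_contra hcon
      simp only [mem_union, mem_Icc, not_or, not_and_or, not_le] at hcon
      obtain ⟨⟨hA, hB⟩, hC⟩ := hcon
      have hA' : θ - 3*π/2 < φ := by rcases hA with h | h <;> linarith
      have hC' : φ < π/2 := by rcases hC with h | h <;> linarith
      apply hx
      rcases hB with hb | hb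
      · have c1 : Real.cos φ < 0 := cnegneg (by linarith) (by linarith)
        have c2 : Real.cos (φ - θ) < 0 := cnegneg (by linarith) (by linarith)
        constructor <;> intro <;> linarith
      · have c1 : 0 < Real.cos φ := cpos (by linarith) (by linarith)
        have c2 : 0 < Real.cos (φ - θ) := cpos (by linarith) (by linarith)
        constructor <;> intro <;> linarith
    have hlower : Ioo (-π) (θ - 3*π/2) ∪ Ioo (-(π/2)) (θ - π/2) ∪ Ioo (π/2) π ⊆ Blune θ := by
      rintro φ ((⟨h1, h2⟩ | ⟨h1, h2⟩) | ⟨h1, h2⟩)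
      · refine ⟨⟨by linarith, by linarith⟩, fun hiff => ?_⟩
        have c1 : Real.cos φ < 0 := cnegneg (by linarith) (by linarith)
        have c2 : 0 < Real.cos (φ - θ) := cpos2 (by linarith) (by linarith)
        linarith [hiff.mpr c2.le]
      · refine ⟨⟨by linarith, by linarith⟩, fun hiff => ?_⟩
        have c1 : 0 < Real.cos φ := cpos h1 (by linarith)
        have c2 : Real.cos (φ - θ) < 0 := cnegneg (by linarith) (by linarith)
        linarith [hiff.mp c1.le]
      · refine ⟨⟨by linarith, h2⟩, fun hiff => ?_⟩
        have c1 : Real.cos φ < 0 := cneg h1 (by linarith)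
        have c2 : 0 < Real.cos (φ - θ) := cpos (by linarith) (by linarith)
        linarith [hiff.mpr c2.le]
    refine le_antisymm ?_ ?_
    · calc volume (Blune θ)
          ≤ volume (Icc (-π) (θ - 3*π/2) ∪ Icc (-(π/2)) (θ - π/2) ∪ Icc (π/2) π) :=
            measure_mono hupper
        _ ≤ volume (Icc (-π) (θ - 3*π/2) ∪ Icc (-(π/2)) (θ - π/2)) + volume (Icc (π/2) π) :=
            measure_union_le _ _
        _ ≤ volume (Icc (-π) (θ - 3*π/2)) + volume (Icc (-(π/2)) (θ - π/2))
            + volume (Icc (π/2) π) := by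
            gcongr
            exact measure_union_le _ _
        _ = ENNReal.ofReal (2*θ) := by
            rw [Real.volume_Icc, Real.volume_Icc, Real.volume_Icc,
              ← ENNReal.ofReal_add (by linarith) (by linarith),
              ← ENNReal.ofReal_add (by linarith) (by linarith)]
            ring_nf
    · have hd1 : Disjoint (Ioo (-π) (θ - 3*π/2)) (Ioo (-(π/2)) (θ - π/2)) := by
        rw [Set.disjoint_left]; rintro x ⟨_, h2⟩ ⟨h3, _⟩; linarith
      have hd2 : Disjoint (Ioo (-π) (θ - 3*π/2) ∪ Ioo (-(π/2)) (θ - π/2)) (Ioo (π/2) π) := by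
        rw [Set.disjoint_left]; rintro x (⟨_, h2⟩ | ⟨_, h2⟩) ⟨h3, _⟩ <;> linarith
      calc ENNReal.ofReal (2*θ)
          = volume (Ioo (-π) (θ - 3*π/2)) + volume (Ioo (-(π/2)) (θ - π/2))
            + volume (Ioo (π/2) π) := by
            rw [Real.volume_Ioo, Real.volume_Ioo, Real.volume_Ioo,
              ← ENNReal.ofReal_add (by linarith) (by linarith),
              ← ENNReal.ofReal_add (by linarith) (by linarith)]
            ring_nf
        _ = volume (Ioo (-π) (θ - 3*π/2) ∪ Ioo (-(π/2)) (θ - π/2)) + volume (Ioo (π/2) π) := by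
            rw [measure_union hd1 measurableSet_Ioo]
        _ = volume (Ioo (-π) (θ - 3*π/2) ∪ Ioo (-(π/2)) (θ - π/2) ∪ Ioo (π/2) π) :=
            (measure_union hd2 measurableSet_Ioo).symm
        _ ≤ volume (Blune θ) := measure_mono hlower

noncomputable def Kconst (d : ℕ) : ENNReal :=
  ∫⁻ z : ({i : Fin d // ¬((i:ℕ) < 2)} → ℝ), ENNReal.ofReal ((1 - ∑ j, (z j)^2)/2)

lemma vol_cone {d : ℕ} (hd : 2 ≤ d) (b : OrthonormalBasis (Fin d) ℝ (EuclideanSpace ℝ (Fin d)))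
    (i0 i1 : Fin d) (hi0 : (i0:ℕ) = 0) (hi1 : (i1:ℕ) = 1)
    (Q : ℝ → ℝ → Prop) (hQ : MeasurableSet {w : ℝ × ℝ | Q w.1 w.2})
    (B : Set ℝ) (hB : MeasurableSet B) (hBsub : B ⊆ Ioo (-π) π)
    (hiff : ∀ r φ, 0 < r → φ ∈ Ioo (-π) π → (Q (r * Real.cos φ) (r * Real.sin φ) ↔ φ ∈ B)) :
    volume {x : EuclideanSpace ℝ (Fin d) | ‖x‖ < 1 ∧ Q (b.repr x i0) (b.repr x i1)}
      = volume B * Kconst d := by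
  classical
  set p : Fin d → Prop := fun i => (i:ℕ) < 2 with hp
  have hpi0 : p i0 := by simp [hp, hi0]
  have hpi1 : p i1 := by simp [hp, hi1]
  -- measurability of evaluation on EuclideanSpace
  have hev : ∀ i : Fin d, Measurable fun y : EuclideanSpace ℝ (Fin d) => y i := fun i =>
    (measurable_pi_apply i).comp (MeasurableEquiv.toLp 2 (Fin d → ℝ)).symm.measurable
  -- the set in coordinates (Fin d → ℝ)
  set Spi : Set (Fin d → ℝ) := {y | (∑ i, y i ^ 2) < 1 ∧ Q (y i0) (y i1)} with hSpi
  have hsummeas : Measurable fun y : Fin d → ℝ => ∑ i, y i ^ 2 :=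
    Finset.measurable_sum _ (fun i _ => (measurable_pi_apply i).pow_const 2)
  have hSpimeas : MeasurableSet Spi := by
    have hsplit : Spi = {y : Fin d → ℝ | (∑ i, y i ^ 2) < 1}
        ∩ {y : Fin d → ℝ | Q (y i0) (y i1)} := rfl
    have hq2 : MeasurableSet {y : Fin d → ℝ | Q (y i0) (y i1)} := by
      have h := ((measurable_pi_apply i0 : Measurable fun y : Fin d → ℝ => y i0).prodMk
        (measurable_pi_apply i1 : Measurable fun y : Fin d → ℝ => y i1)) hQ
      exact h
    rw [hsplit]
    exact (measurableSet_lt hsummeas measurable_const).inter hq2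
  -- step 1: from E to (Fin d → ℝ)
  have step1 : volume {x : EuclideanSpace ℝ (Fin d) | ‖x‖ < 1 ∧ Q (b.repr x i0) (b.repr x i1)}
      = volume Spi := by
    have hset : {x : EuclideanSpace ℝ (Fin d) | ‖x‖ < 1 ∧ Q (b.repr x i0) (b.repr x i1)}
        = b.repr ⁻¹' ((MeasurableEquiv.toLp 2 (Fin d → ℝ)).symm ⁻¹' Spi) := by
      have hnorm : ∀ y : EuclideanSpace ℝ (Fin d),
          ‖y‖ < 1 ↔ (∑ i, ((MeasurableEquiv.toLp 2 (Fin d → ℝ)).symm y) i ^ 2) < 1 := by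
        intro y
        rw [EuclideanSpace.norm_eq, Real.sqrt_lt' one_pos, one_pow]
        simp only [Real.norm_eq_abs, sq_abs]
        exact Iff.rfl
      ext x
      simp only [mem_setOf_eq, mem_preimage, hSpi]
      constructor
      · rintro ⟨h1, h2⟩
        exact ⟨(hnorm (b.repr x)).1 (by rwa [b.repr.norm_map]), h2⟩
      · rintro ⟨h1, h2⟩
        have := (hnorm (b.repr x)).2 h1
        rw [b.repr.norm_map] at this
        exact ⟨this, h2⟩
    rw [hset, b.measurePreserving_repr.measure_preimage
      (((EuclideanSpace.volume_preserving_symm_measurableEquiv_toLp (Fin d)).measurable hSpimeas).nullMeasurableSet),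
      (EuclideanSpace.volume_preserving_symm_measurableEquiv_toLp (Fin d)).measure_preimage
        hSpimeas.nullMeasurableSet]
  rw [step1]
  -- step 2: split coordinates
  set W := ({i : Fin d // p i} → ℝ)
  set Z := ({i : Fin d // ¬ p i} → ℝ)
  set Sprod : Set (W × Z) :=
    {q | ((∑ i, q.1 i ^ 2) + ∑ j, q.2 j ^ 2) < 1 ∧ Q (q.1 ⟨i0, hpi0⟩) (q.1 ⟨i1, hpi1⟩)}
    with hSprod
  have hSprodmeas : MeasurableSet Sprod := by
    have hsplit : Sprod = {q : W × Z | ((∑ i, q.1 i ^ 2) + ∑ j, q.2 j ^ 2) < 1}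
        ∩ {q : W × Z | Q (q.1 ⟨i0, hpi0⟩) (q.1 ⟨i1, hpi1⟩)} := rfl
    have hm1 : Measurable fun q : W × Z => (∑ i, q.1 i ^ 2) + ∑ j, q.2 j ^ 2 := by
      refine Measurable.add ?_ ?_
      · exact (Finset.measurable_sum _ fun i _ =>
          ((measurable_pi_apply i).comp measurable_fst).pow_const 2)
      · exact (Finset.measurable_sum _ fun j _ =>
          ((measurable_pi_apply j).comp measurable_snd).pow_const 2)
    have hev0 : Measurable fun q : W × Z => q.1 ⟨i0, hpi0⟩ :=
      (measurable_pi_apply _).comp measurable_fst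
    have hev1 : Measurable fun q : W × Z => q.1 ⟨i1, hpi1⟩ :=
      (measurable_pi_apply _).comp measurable_fst
    have hq2 : MeasurableSet {q : W × Z | Q (q.1 ⟨i0, hpi0⟩) (q.1 ⟨i1, hpi1⟩)} := by
      have h := (hev0.prodMk hev1) hQ
      exact h
    rw [hsplit]
    exact (measurableSet_lt hm1 measurable_const).inter hq2
  have step2 : volume Spi = volume Sprod := by
    have hset : Spi = (MeasurableEquiv.piEquivPiSubtypeProd (fun _ : Fin d => ℝ) p) ⁻¹' Sprod := by
      ext y
      simp only [mem_setOf_eq, mem_preimage, hSpi, hSprod,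
        MeasurableEquiv.piEquivPiSubtypeProd, Equiv.piEquivPiSubtypeProd,
        MeasurableEquiv.coe_mk, Equiv.coe_fn_mk]
      show _ ↔ ((∑ i : {i // p i}, y i ^ 2) + ∑ j : {j // ¬ p j}, y j ^ 2) < 1 ∧ Q (y i0) (y i1)
      rw [Fintype.sum_subtype_add_sum_subtype p (fun i => y i ^ 2)]
    rw [hset, (volume_preserving_piEquivPiSubtypeProd (fun _ : Fin d => ℝ) p).measure_preimage
      hSprodmeas.nullMeasurableSet]
  rw [step2]
  -- the equivalence from W to ℂ
  have h0lt : (0:ℕ) < d := by omega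
  have h1lt : (1:ℕ) < d := by omega
  set e2 : Fin 2 ≃ {i : Fin d // p i} :=
    { toFun := fun j => ⟨⟨(j:ℕ), lt_of_lt_of_le j.2 hd⟩, j.2⟩
      invFun := fun i => ⟨(i.1:ℕ), i.2⟩
      left_inv := by rintro ⟨j, hj⟩; rfl
      right_inv := by rintro ⟨⟨i, hi⟩, hpi⟩; rfl } with he2
  set G : W ≃ᵐ ℂ :=
    ((MeasurableEquiv.piCongrLeft (fun _ : {i : Fin d // p i} => ℝ) e2).symm).trans
      (MeasurableEquiv.finTwoArrow.trans Complex.measurableEquivRealProd.symm) with hG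
  have hmp1 : MeasurePreserving
      ((MeasurableEquiv.piCongrLeft (fun _ : {i : Fin d // p i} => ℝ) e2).symm)
      (volume : Measure W) (volume : Measure (Fin 2 → ℝ)) :=
    (volume_measurePreserving_piCongrLeft (fun _ : {i : Fin d // p i} => ℝ) e2).symm
  have hmp2 : MeasurePreserving (MeasurableEquiv.finTwoArrow : (Fin 2 → ℝ) ≃ᵐ ℝ × ℝ)
      (volume : Measure (Fin 2 → ℝ)) (volume : Measure (ℝ × ℝ)) :=
    volume_preserving_finTwoArrow ℝ
  have hmp3 : MeasurePreserving (Complex.measurableEquivRealProd.symm)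
      (volume : Measure (ℝ × ℝ)) (volume : Measure ℂ) :=
    Complex.volume_preserving_equiv_real_prod.symm
  have hGmp : MeasurePreserving G volume volume := (hmp3.comp hmp2).comp hmp1
  have he20 : e2 0 = ⟨i0, hpi0⟩ := by
    apply Subtype.ext; apply Fin.ext; simp [he2, hi0]
  have he21 : e2 1 = ⟨i1, hpi1⟩ := by
    apply Subtype.ext; apply Fin.ext; simp [he2, hi1]
  have hGeq : ∀ w : W, G w = Complex.measurableEquivRealProd.symm (w (e2 0), w (e2 1)) := by
    intro w
    rfl
  have hGre : ∀ w : W, (G w).re = w ⟨i0, hpi0⟩ := by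
    intro w
    rw [hGeq, ← he20]
    rfl
  have hGim : ∀ w : W, (G w).im = w ⟨i1, hpi1⟩ := by
    intro w
    rw [hGeq, ← he21]
    rfl
  have hGabs : ∀ w : W, ‖(G w)‖ ^ 2 = ∑ i, w i ^ 2 := by
    intro w
    rw [Complex.sq_norm, Complex.normSq_apply, hGre, hGim, ← Equiv.sum_comp e2 (fun i => w i ^ 2),
      Fin.sum_univ_two, he20, he21]
    ring
  -- Fubini over the second factor
  have hprodmeas : (volume : Measure (W × Z)) = (volume : Measure W).prod volume :=
    Measure.volume_eq_prod W Z
  rw [hprodmeas, Measure.prod_apply_symm hSprodmeas]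
  -- compute slice measures
  have hslice : ∀ z : Z, volume ((fun w => (w, z)) ⁻¹' Sprod)
      = volume B * ENNReal.ofReal ((1 - ∑ j, (z j)^2)/2) := by
    intro z
    set t : ℝ := 1 - ∑ j, (z j)^2 with ht
    have hset : (fun w => (w, z)) ⁻¹' Sprod
        = G ⁻¹' {v : ℂ | Q v.re v.im ∧ ‖v‖ ^ 2 < t} := by
      ext w
      simp only [mem_preimage, hSprod, mem_setOf_eq, hGre, hGim, hGabs, ht]
      constructor
      · rintro ⟨h1, h2⟩; exact ⟨h2, by linarith⟩
      · rintro ⟨h1, h2⟩; exact ⟨by linarith, h1⟩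
    have hCmeas : MeasurableSet {v : ℂ | Q v.re v.im ∧ ‖v‖ ^ 2 < t} := by
      have hsplit : {v : ℂ | Q v.re v.im ∧ ‖v‖ ^ 2 < t}
          = {v : ℂ | Q v.re v.im} ∩ {v : ℂ | ‖v‖ ^ 2 < t} := rfl
      have hq2 : MeasurableSet {v : ℂ | Q v.re v.im} := by
        have h := (Complex.measurable_re.prodMk Complex.measurable_im) hQ
        exact h
      rw [hsplit]
      exact hq2.inter (measurableSet_lt (continuous_norm.measurable.pow_const 2)
        measurable_const)
    rw [hset, hGmp.measure_preimage hCmeas.nullMeasurableSet]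
    -- a.e. switch from Q to arg ∈ B
    have hN : volume {v : ℂ | v.im = 0 ∧ v.re ≤ 0} = 0 := by
      have hsub : {v : ℂ | v.im = 0 ∧ v.re ≤ 0}
          ⊆ Complex.measurableEquivRealProd ⁻¹' (univ ×ˢ ({0} : Set ℝ)) := by
        intro v hv
        simp only [mem_preimage, mem_prod, mem_univ, true_and, mem_singleton_iff]
        exact hv.1
      refine measure_mono_null hsub ?_
      rw [Complex.volume_preserving_equiv_real_prod.measure_preimage
        (MeasurableSet.univ.prod (measurableSet_singleton 0)).nullMeasurableSet,
        Measure.volume_eq_prod ℝ ℝ, Measure.prod_prod, Real.volume_singleton, mul_zero]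
    have hkey : ∀ v : ℂ, ¬(v.im = 0 ∧ v.re ≤ 0) → (Q v.re v.im ↔ Complex.arg v ∈ B) := by
      intro v hv
      have hv0 : v ≠ 0 := by rintro rfl; exact hv ⟨rfl, le_refl 0⟩
      have habs : 0 < ‖v‖ := norm_pos_iff.2 hv0
      have harg : Complex.arg v ∈ Ioo (-π) π := by
        refine ⟨Complex.neg_pi_lt_arg v, ?_⟩
        rw [Complex.arg_lt_pi_iff]
        by_cases him : v.im = 0
        · left
          by_contra hre
          push_neg at hre
          exact hv ⟨him, hre.le⟩
        · right; exact him
      have h := hiff (‖v‖) (Complex.arg v) habs harg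
      rwa [Complex.norm_mul_cos_arg, Complex.norm_mul_sin_arg] at h
    have haeeq : {v : ℂ | Q v.re v.im ∧ ‖v‖ ^ 2 < t}
        =ᵐ[volume] {v : ℂ | Complex.arg v ∈ B ∧ ‖v‖ ^ 2 < t} := by
      rw [ae_eq_set]
      constructor
      · refine measure_mono_null ?_ hN
        rintro v ⟨⟨hq, hlt⟩, hns⟩
        by_contra hvN
        exact hns ⟨(hkey v hvN).1 hq, hlt⟩
      · refine measure_mono_null ?_ hN
        rintro v ⟨⟨hq, hlt⟩, hns⟩
        by_contra hvN
        exact hns ⟨(hkey v hvN).2 hq, hlt⟩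
    rw [measure_congr haeeq, vol_sector hB hBsub t]
  -- assemble
  have hKmeas : Measurable fun z : Z => ENNReal.ofReal ((1 - ∑ j, (z j)^2)/2) :=
    ((measurable_const.sub (Finset.measurable_sum _ fun j _ =>
      (measurable_pi_apply j).pow_const 2)).div_const 2).ennreal_ofReal
  calc ∫⁻ z, volume ((fun w => (w, z)) ⁻¹' Sprod) ∂volume
      = ∫⁻ z : Z, volume B * ENNReal.ofReal ((1 - ∑ j, (z j)^2)/2) ∂volume :=
        lintegral_congr hslice
    _ = volume B * Kconst d := by
        rw [lintegral_const_mul _ hKmeas]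
        rfl

lemma vol_ball_eq {d : ℕ} (hd : 2 ≤ d) :
    volume (ball (0 : EuclideanSpace ℝ (Fin d)) 1) = ENNReal.ofReal (2*π) * Kconst d := by
  have hp := Real.pi_pos
  obtain ⟨b⟩ : Nonempty (OrthonormalBasis (Fin d) ℝ (EuclideanSpace ℝ (Fin d))) :=
    ⟨(EuclideanSpace.basisFun (Fin d) ℝ)⟩
  have h := vol_cone hd b ⟨0, by omega⟩ ⟨1, by omega⟩ rfl rfl (fun _ _ => True)
    (by simp) (Ioo (-π) π) measurableSet_Ioo subset_rfl (fun r φ hr hφ => by simpa using hφ)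
  have hset : {x : EuclideanSpace ℝ (Fin d) | ‖x‖ < 1 ∧ True} =
      ball (0 : EuclideanSpace ℝ (Fin d)) 1 := by
    ext x
    simp [mem_ball_zero_iff]
  rw [hset] at h
  rw [h, Real.volume_Ioo, show π - -π = 2*π by ring]

lemma pair_lemma {d : ℕ} (hd : 2 ≤ d) (u v : EuclideanSpace ℝ (Fin d))
    (hu : ‖u‖ = 1) (hv : ‖v‖ = 1) :
    volume {x : EuclideanSpace ℝ (Fin d) | ‖x‖ < 1 ∧
        ¬(0 ≤ (inner ℝ u x : ℝ) ↔ 0 ≤ (inner ℝ v x : ℝ))} =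
      ENNReal.ofReal (Real.arccos (inner ℝ u v : ℝ) / π) *
        volume (ball (0 : EuclideanSpace ℝ (Fin d)) 1) := by
  have hp := Real.pi_pos
  classical
  by_cases hvu : v = u
  · subst hvu
    have hset : {x : EuclideanSpace ℝ (Fin d) | ‖x‖ < 1 ∧
        ¬(0 ≤ (inner ℝ v x : ℝ) ↔ 0 ≤ (inner ℝ v x : ℝ))} = ∅ := by
      ext x; simp
    have hone : (inner ℝ v v : ℝ) = 1 := by
      rw [real_inner_self_eq_norm_sq, hv]; norm_num
    rw [hset, measure_empty, hone, Real.arccos_one]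
    simp
  by_cases hvnu : v = -u
  · have hinner : ∀ x : EuclideanSpace ℝ (Fin d), (inner ℝ v x : ℝ) = -(inner ℝ u x : ℝ) := by
      intro x; rw [hvnu, inner_neg_left]
    have hnull : volume {x : EuclideanSpace ℝ (Fin d) | (inner ℝ u x : ℝ) = 0} = 0 := by
      have hker : {x : EuclideanSpace ℝ (Fin d) | (inner ℝ u x : ℝ) = 0}
          = (LinearMap.ker ((innerSL ℝ u).toLinearMap) : Submodule ℝ (EuclideanSpace ℝ (Fin d))) := by
        ext x
        simp only [mem_setOf_eq, SetLike.mem_coe, LinearMap.mem_ker,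
          ContinuousLinearMap.coe_coe, innerSL_apply_apply]
      rw [hker]
      refine Measure.addHaar_submodule _ _ ?_
      intro htop
      have hu0 : u ∈ LinearMap.ker ((innerSL ℝ u).toLinearMap) := by rw [htop]; trivial
      have : (inner ℝ u u : ℝ) = 0 := hu0
      rw [real_inner_self_eq_norm_sq, hu] at this
      norm_num at this
    have hset : {x : EuclideanSpace ℝ (Fin d) | ‖x‖ < 1 ∧
        ¬(0 ≤ (inner ℝ u x : ℝ) ↔ 0 ≤ (inner ℝ v x : ℝ))}
        = (ball (0 : EuclideanSpace ℝ (Fin d)) 1) \ {x : EuclideanSpace ℝ (Fin d) | (inner ℝ u x : ℝ) = 0} := by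
      ext x
      simp only [mem_setOf_eq, mem_diff, mem_ball_zero_iff, hinner]
      constructor
      · rintro ⟨h1, h2⟩
        exact ⟨h1, fun h0 => h2 (by rw [h0]; norm_num)⟩
      · rintro ⟨h1, h2⟩
        refine ⟨h1, fun hiff => h2 ?_⟩
        rcases lt_trichotomy (inner ℝ u x : ℝ) 0 with h | h | h
        · have := hiff.mpr (by linarith); linarith
        · exact h
        · have := hiff.mp (by linarith); linarith
    have hm1 : (inner ℝ u v : ℝ) = -1 := by
      rw [hvnu, inner_neg_right, real_inner_self_eq_norm_sq, hu]; norm_num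
    rw [hset, measure_diff_null hnull, hm1, Real.arccos_neg_one, div_self hp.ne',
      ENNReal.ofReal_one, one_mul]
  · -- main case
    set t : ℝ := (inner ℝ u v : ℝ) with htdef
    have habs : |t| ≤ 1 := by
      have := abs_real_inner_le_norm u v
      rwa [hu, hv, one_mul] at this
    have habs1 := abs_le.1 habs
    have ht1 : t < 1 := by
      rcases lt_or_eq_of_le habs1.2 with h | h
      · exact h
      · exact absurd ((inner_eq_one_iff_of_norm_eq_one hu hv).1 h).symm hvu
    have htm1 : -1 < t := by
      rcases lt_or_eq_of_le habs1.1 with h | h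
      · exact h
      · exfalso
        have h1 : (inner ℝ u (-v) : ℝ) = 1 := by rw [inner_neg_right]; simp [← htdef, ← h]
        have h2 := (inner_eq_one_iff_of_norm_eq_one hu (by rw [norm_neg]; exact hv)).1 h1
        exact hvnu (by rw [h2, neg_neg])
    set θ := Real.arccos t with hθdef
    have hθ0 : 0 < θ := Real.arccos_pos.2 ht1
    have hθπ : θ < π := by
      rcases lt_or_eq_of_le (Real.arccos_le_pi t) with h | h
      · exact h
      · have := Real.arccos_eq_pi.1 h; linarith
    have hcos : Real.cos θ = t := Real.cos_arccos (by linarith) (by linarith)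
    set s : ℝ := Real.sin θ with hsdef
    have hs0 : 0 < s := Real.sin_pos_of_pos_of_lt_pi hθ0 hθπ
    set w : EuclideanSpace ℝ (Fin d) := v - t • u with hw
    have hvu' : (inner ℝ v u : ℝ) = t := by rw [real_inner_comm]
    have huu : (inner ℝ u u : ℝ) = 1 := by rw [real_inner_self_eq_norm_sq, hu]; norm_num
    have hvv : (inner ℝ v v : ℝ) = 1 := by rw [real_inner_self_eq_norm_sq, hv]; norm_num
    have hiw : (inner ℝ u w : ℝ) = 0 := by
      rw [hw, inner_sub_right, real_inner_smul_right, huu, ← htdef]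
      ring
    have hwnorm2 : (inner ℝ w w : ℝ) = 1 - t^2 := by
      rw [hw, inner_sub_left, inner_sub_right, inner_sub_right, real_inner_smul_left,
        real_inner_smul_left, real_inner_smul_right, real_inner_smul_right,
        huu, hvv, hvu', ← htdef]
      ring
    have hwnorm : ‖w‖ = s := by
      have h1 : ‖w‖ ^ 2 = s ^ 2 := by
        rw [← real_inner_self_eq_norm_sq, hwnorm2, hsdef, Real.sin_sq, hcos]
      have h2 : 0 ≤ ‖w‖ := norm_nonneg w
      nlinarith
    set e2 : EuclideanSpace ℝ (Fin d) := s⁻¹ • w with he2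
    have he2norm : ‖e2‖ = 1 := by
      rw [he2, norm_smul, hwnorm, Real.norm_eq_abs, abs_of_pos (inv_pos.2 hs0),
        inv_mul_cancel₀ hs0.ne']
    have hue2 : (inner ℝ u e2 : ℝ) = 0 := by
      rw [he2, real_inner_smul_right, hiw, mul_zero]
    have he2e2 : (inner ℝ e2 e2 : ℝ) = 1 := by
      rw [real_inner_self_eq_norm_sq, he2norm]; norm_num
    have hvdecomp : v = t • u + s • e2 := by
      rw [he2, smul_smul, mul_inv_cancel₀ hs0.ne', one_smul, hw]
      abel
    have h0d : 0 < d := by omega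
    have h1d : 1 < d := by omega
    set i0 : Fin d := ⟨0, h0d⟩ with hi0
    set i1 : Fin d := ⟨1, h1d⟩ with hi1
    have hne : i0 ≠ i1 := by simp [hi0, hi1, Fin.ext_iff]
    set f : Fin d → EuclideanSpace ℝ (Fin d) := fun i => if i = i0 then u else e2 with hf
    have hfi0 : f i0 = u := by rw [hf]; simp
    have hfi1 : f i1 = e2 := by rw [hf]; simp [hne.symm]
    have hfval : ∀ i j : Fin d, i ∈ ({i0, i1} : Set (Fin d)) → j ∈ ({i0, i1} : Set (Fin d)) →
        (inner ℝ (f i) (f j) : ℝ) = if i = j then 1 else 0 := by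
      intro i j hi hj
      simp only [mem_insert_iff, mem_singleton_iff] at hi hj
      rcases hi with hi | hi <;> rcases hj with hj | hj <;> subst hi <;> subst hj
      · rw [hfi0, if_pos rfl]; exact huu
      · rw [hfi0, hfi1, if_neg hne]; exact hue2
      · rw [hfi1, hfi0, if_neg (Ne.symm hne)]
        rw [real_inner_comm]; exact hue2
      · rw [hfi1, if_pos rfl]; exact he2e2
    have horth : Orthonormal ℝ (Set.restrict ({i0, i1} : Set (Fin d)) f) := by
      rw [orthonormal_iff_ite]
      rintro ⟨i, hi⟩ ⟨j, hj⟩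
      simp only [Set.restrict_apply, Subtype.mk_eq_mk]
      exact hfval i j hi hj
    have hcard : Module.finrank ℝ (EuclideanSpace ℝ (Fin d)) = Fintype.card (Fin d) := by
      rw [finrank_euclideanSpace_fin, Fintype.card_fin]
    obtain ⟨b, hbf⟩ := horth.exists_orthonormalBasis_extension_of_card_eq hcard
    have hb0 : b i0 = u := by
      rw [hbf i0 (by simp), hf]
      simp
    have hb1 : b i1 = e2 := by
      rw [hbf i1 (by simp), hf]
      simp [hne.symm]
    have hru : ∀ x : EuclideanSpace ℝ (Fin d), (inner ℝ u x : ℝ) = b.repr x i0 := by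
      intro x
      rw [b.repr_apply_apply, hb0]
    have hre2 : ∀ x : EuclideanSpace ℝ (Fin d), (inner ℝ e2 x : ℝ) = b.repr x i1 := by
      intro x
      rw [b.repr_apply_apply, hb1]
    have hrv : ∀ x : EuclideanSpace ℝ (Fin d),
        (inner ℝ v x : ℝ) = t * b.repr x i0 + s * b.repr x i1 := by
      intro x
      rw [← hru, ← hre2]
      conv_lhs => rw [hvdecomp]
      rw [inner_add_left, real_inner_smul_left, real_inner_smul_left]
    set Q : ℝ → ℝ → Prop := fun α β => ¬(0 ≤ α ↔ 0 ≤ t*α + s*β) with hQdef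
    have hQmeas : MeasurableSet {w : ℝ × ℝ | Q w.1 w.2} := by
      have hm1 : MeasurableSet {w : ℝ × ℝ | 0 ≤ w.1} :=
        measurableSet_le measurable_const measurable_fst
      have hm2 : MeasurableSet {w : ℝ × ℝ | 0 ≤ t*w.1 + s*w.2} :=
        measurableSet_le measurable_const
          ((measurable_fst.const_mul t).add (measurable_snd.const_mul s))
      have hsplit : {w : ℝ × ℝ | Q w.1 w.2} =
          ({w : ℝ × ℝ | 0 ≤ w.1} ∩ {w : ℝ × ℝ | 0 ≤ t*w.1 + s*w.2}ᶜ)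
          ∪ ({w : ℝ × ℝ | 0 ≤ w.1}ᶜ ∩ {w : ℝ × ℝ | 0 ≤ t*w.1 + s*w.2}) := by
        ext q
        simp only [hQdef, mem_setOf_eq, mem_union, mem_inter_iff, mem_compl_iff]
        tauto
      rw [hsplit]
      exact (hm1.inter hm2.compl).union (hm1.compl.inter hm2)
    have hiff : ∀ r φ, 0 < r → φ ∈ Ioo (-π) π →
        (Q (r * Real.cos φ) (r * Real.sin φ) ↔ φ ∈ Blune θ) := by
      intro r φ hr hφ
      have hcalc : t * (r * Real.cos φ) + s * (r * Real.sin φ) = r * Real.cos (φ - θ) := by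
        rw [Real.cos_sub, ← hcos, hsdef]
        ring
      show ¬(0 ≤ r * Real.cos φ ↔ 0 ≤ t * (r * Real.cos φ) + s * (r * Real.sin φ))
          ↔ φ ∈ Blune θ
      rw [hcalc, mul_nonneg_iff_of_pos_left hr, mul_nonneg_iff_of_pos_left hr]
      exact ⟨fun h => ⟨hφ, h⟩, fun h => h.2⟩
    have hmain := vol_cone hd b i0 i1 rfl rfl Q hQmeas (Blune θ) (Blune_meas θ)
      (fun _ h => h.1) hiff
    have hsets : {x : EuclideanSpace ℝ (Fin d) | ‖x‖ < 1 ∧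
        ¬(0 ≤ (inner ℝ u x : ℝ) ↔ 0 ≤ (inner ℝ v x : ℝ))}
        = {x : EuclideanSpace ℝ (Fin d) | ‖x‖ < 1 ∧ Q (b.repr x i0) (b.repr x i1)} := by
      ext x
      simp only [mem_setOf_eq, hQdef]
      rw [← hrv, ← hru]
    rw [hsets, hmain, vol_Blune hθ0 hθπ, vol_ball_eq hd, ← mul_assoc,
      ← ENNReal.ofReal_mul (by positivity)]
    congr 2
    field_simp

lemma sgn_eq_iff (p q : ℝ) : sgn p = sgn q ↔ (0 ≤ p ↔ 0 ≤ q) := by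
  unfold sgn
  by_cases h1 : 0 ≤ p <;> by_cases h2 : 0 ≤ q <;> simp [h1, h2] <;> norm_num

set_option maxHeartbeats 2000000 in
/-- For unit vectors `a, b, c` in `ℝ^d` (`d ≥ 2`) and `r` uniformly distributed on the
unit sphere, the probability that `sgn⟨a, r⟩ = sgn⟨c, r⟩` and `sgn⟨b, r⟩ ≠ sgn⟨c, r⟩`
equals `(θ(a,b) − θ(c,a) + θ(c,b)) / (2π)`. -/
theorem sphere_rounding_probability
    {d : ℕ} (hd : 2 ≤ d) (a b c : EuclideanSpace ℝ (Fin d))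
    (ha : ‖a‖ = 1) (hb : ‖b‖ = 1) (hc : ‖c‖ = 1) :
    uniformSphere d
        {r : sphere (0 : EuclideanSpace ℝ (Fin d)) 1 |
          sgn (inner ℝ a (r : EuclideanSpace ℝ (Fin d)) : ℝ) =
              sgn (inner ℝ c (r : EuclideanSpace ℝ (Fin d)) : ℝ) ∧
            sgn (inner ℝ b (r : EuclideanSpace ℝ (Fin d)) : ℝ) ≠
              sgn (inner ℝ c (r : EuclideanSpace ℝ (Fin d)) : ℝ)} =
      ENNReal.ofReal ((angleOf a b - angleOf c a + angleOf c b) / (2 * Real.pi)) := by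
  classical
  have hp := Real.pi_pos
  -- rewrite the set in terms of inequalities
  have hset0 : {r : sphere (0 : (EuclideanSpace ℝ (Fin d))) 1 |
      sgn (inner ℝ a (r : (EuclideanSpace ℝ (Fin d))) : ℝ) = sgn (inner ℝ c (r : (EuclideanSpace ℝ (Fin d))) : ℝ) ∧
        sgn (inner ℝ b (r : (EuclideanSpace ℝ (Fin d))) : ℝ) ≠ sgn (inner ℝ c (r : (EuclideanSpace ℝ (Fin d))) : ℝ)}
      = {r : sphere (0 : (EuclideanSpace ℝ (Fin d))) 1 | (0 ≤ (inner ℝ a (r : (EuclideanSpace ℝ (Fin d))) : ℝ) ↔ 0 ≤ (inner ℝ c (r : (EuclideanSpace ℝ (Fin d))) : ℝ)) ∧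
          ¬(0 ≤ (inner ℝ b (r : (EuclideanSpace ℝ (Fin d))) : ℝ) ↔ 0 ≤ (inner ℝ c (r : (EuclideanSpace ℝ (Fin d))) : ℝ))} := by
    ext r
    simp only [mem_setOf_eq, Ne, sgn_eq_iff]
  rw [hset0]
  set S : Set (sphere (0 : (EuclideanSpace ℝ (Fin d))) 1) :=
    {r : sphere (0 : (EuclideanSpace ℝ (Fin d))) 1 | (0 ≤ (inner ℝ a (r : (EuclideanSpace ℝ (Fin d))) : ℝ) ↔ 0 ≤ (inner ℝ c (r : (EuclideanSpace ℝ (Fin d))) : ℝ)) ∧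
      ¬(0 ≤ (inner ℝ b (r : (EuclideanSpace ℝ (Fin d))) : ℝ) ↔ 0 ≤ (inner ℝ c (r : (EuclideanSpace ℝ (Fin d))) : ℝ))} with hS
  -- measurability
  have hcont : ∀ w : (EuclideanSpace ℝ (Fin d)), Continuous fun r : sphere (0 : (EuclideanSpace ℝ (Fin d))) 1 => (inner ℝ w (r : (EuclideanSpace ℝ (Fin d))) : ℝ) :=
    fun w => (innerSL ℝ w).continuous.comp continuous_subtype_val
  have hmw : ∀ w : (EuclideanSpace ℝ (Fin d)), MeasurableSet {r : sphere (0 : (EuclideanSpace ℝ (Fin d))) 1 | 0 ≤ (inner ℝ w (r : (EuclideanSpace ℝ (Fin d))) : ℝ)} :=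
    fun w => measurableSet_le measurable_const (hcont w).measurable
  have hSmeas : MeasurableSet S := by
    have : S = ({r : sphere (0 : (EuclideanSpace ℝ (Fin d))) 1 | 0 ≤ (inner ℝ a (r : (EuclideanSpace ℝ (Fin d))) : ℝ)}
          ∩ {r | 0 ≤ (inner ℝ c (r : (EuclideanSpace ℝ (Fin d))) : ℝ)}
        ∪ ({r | 0 ≤ (inner ℝ a (r : (EuclideanSpace ℝ (Fin d))) : ℝ)}ᶜ ∩ {r | 0 ≤ (inner ℝ c (r : (EuclideanSpace ℝ (Fin d))) : ℝ)}ᶜ))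
        ∩ (({r | 0 ≤ (inner ℝ b (r : (EuclideanSpace ℝ (Fin d))) : ℝ)} ∩ {r | 0 ≤ (inner ℝ c (r : (EuclideanSpace ℝ (Fin d))) : ℝ)}ᶜ)
          ∪ ({r | 0 ≤ (inner ℝ b (r : (EuclideanSpace ℝ (Fin d))) : ℝ)}ᶜ ∩ {r | 0 ≤ (inner ℝ c (r : (EuclideanSpace ℝ (Fin d))) : ℝ)})) := by
      ext r
      simp only [hS, mem_setOf_eq, mem_inter_iff, mem_union, mem_compl_iff]
      tauto
    rw [this]
    exact (((hmw a).inter (hmw c)).union ((hmw a).compl.inter (hmw c).compl)).inter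
      ((((hmw b)).inter (hmw c).compl).union ((hmw b).compl.inter (hmw c)))
  -- the solid sets
  set M : Set (EuclideanSpace ℝ (Fin d)) := {x : (EuclideanSpace ℝ (Fin d)) | ‖x‖ < 1 ∧ ((0 ≤ (inner ℝ a x : ℝ) ↔ 0 ≤ (inner ℝ c x : ℝ)) ∧
      ¬(0 ≤ (inner ℝ b x : ℝ) ↔ 0 ≤ (inner ℝ c x : ℝ)))} with hM
  set X : Set (EuclideanSpace ℝ (Fin d)) := {x : (EuclideanSpace ℝ (Fin d)) | ‖x‖ < 1 ∧ ¬(0 ≤ (inner ℝ a x : ℝ) ↔ 0 ≤ (inner ℝ c x : ℝ))} with hX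
  set Y : Set (EuclideanSpace ℝ (Fin d)) := {x : (EuclideanSpace ℝ (Fin d)) | ‖x‖ < 1 ∧ ¬(0 ≤ (inner ℝ b x : ℝ) ↔ 0 ≤ (inner ℝ c x : ℝ))} with hY
  set D : Set (EuclideanSpace ℝ (Fin d)) := {x : (EuclideanSpace ℝ (Fin d)) | ‖x‖ < 1 ∧ ¬(0 ≤ (inner ℝ a x : ℝ) ↔ 0 ≤ (inner ℝ b x : ℝ))} with hD
  have hmw' : ∀ w : (EuclideanSpace ℝ (Fin d)), MeasurableSet {x : (EuclideanSpace ℝ (Fin d)) | 0 ≤ (inner ℝ w x : ℝ)} :=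
    fun w => measurableSet_le measurable_const (innerSL ℝ w).continuous.measurable
  have hball : MeasurableSet {x : (EuclideanSpace ℝ (Fin d)) | ‖x‖ < 1} := by
    have : {x : (EuclideanSpace ℝ (Fin d)) | ‖x‖ < 1} = ball (0 : (EuclideanSpace ℝ (Fin d))) 1 := by
      ext x; simp [mem_ball_zero_iff]
    rw [this]; exact measurableSet_ball
  have hnotiff : ∀ w w' : (EuclideanSpace ℝ (Fin d)), MeasurableSet {x : (EuclideanSpace ℝ (Fin d)) | ¬(0 ≤ (inner ℝ w x : ℝ) ↔ 0 ≤ (inner ℝ w' x : ℝ))} := by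
    intro w w'
    have : {x : (EuclideanSpace ℝ (Fin d)) | ¬(0 ≤ (inner ℝ w x : ℝ) ↔ 0 ≤ (inner ℝ w' x : ℝ))}
        = ({x : (EuclideanSpace ℝ (Fin d)) | 0 ≤ (inner ℝ w x : ℝ)} ∩ {x : (EuclideanSpace ℝ (Fin d)) | 0 ≤ (inner ℝ w' x : ℝ)}ᶜ)
          ∪ ({x : (EuclideanSpace ℝ (Fin d)) | 0 ≤ (inner ℝ w x : ℝ)}ᶜ ∩ {x : (EuclideanSpace ℝ (Fin d)) | 0 ≤ (inner ℝ w' x : ℝ)}) := by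
      ext x
      simp only [mem_setOf_eq, mem_inter_iff, mem_union, mem_compl_iff]
      tauto
    rw [this]
    exact ((hmw' w).inter (hmw' w').compl).union ((hmw' w).compl.inter (hmw' w'))
  have hXmeas : MeasurableSet X := hball.inter (hnotiff a c)
  have hYmeas : MeasurableSet Y := hball.inter (hnotiff b c)
  -- measure identities
  set V : ENNReal := volume (ball (0 : (EuclideanSpace ℝ (Fin d))) 1) with hV
  have hVfin : V ≠ ⊤ := measure_ball_lt_top.ne
  have hV0 : V ≠ 0 := (measure_ball_pos volume (0 : (EuclideanSpace ℝ (Fin d))) one_pos).ne'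
  have hXsub : X ⊆ ball (0 : (EuclideanSpace ℝ (Fin d))) 1 := fun x hx => mem_ball_zero_iff.2 hx.1
  have hYsub : Y ⊆ ball (0 : (EuclideanSpace ℝ (Fin d))) 1 := fun x hx => mem_ball_zero_iff.2 hx.1
  have hDsub : D ⊆ ball (0 : (EuclideanSpace ℝ (Fin d))) 1 := fun x hx => mem_ball_zero_iff.2 hx.1
  have hMsub : M ⊆ ball (0 : (EuclideanSpace ℝ (Fin d))) 1 := fun x hx => mem_ball_zero_iff.2 hx.1
  have hDeq : D = (X \ Y) ∪ (Y \ X) := by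
    ext x
    simp only [hD, hX, hY, mem_setOf_eq, mem_union, mem_diff]
    tauto
  have hMeq : M = Y \ X := by
    ext x
    simp only [hM, hX, hY, mem_setOf_eq, mem_diff]
    tauto
  have hvolD : volume D = volume (X \ Y) + volume (Y \ X) := by
    rw [hDeq, measure_union disjoint_sdiff_sdiff (hYmeas.diff hXmeas)]
  have hvolX : volume (X ∩ Y) + volume (X \ Y) = volume X := measure_inter_add_diff X hYmeas
  have hvolY : volume (Y ∩ X) + volume (Y \ X) = volume Y := measure_inter_add_diff Y hXmeas
  have hXY : volume (X ∩ Y) = volume (Y ∩ X) := by rw [inter_comm]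
  -- apply the pair lemma
  have hpairD : volume D = ENNReal.ofReal (Real.arccos (inner ℝ a b : ℝ) / π) * V :=
    pair_lemma hd a b ha hb
  have hpairX : volume X = ENNReal.ofReal (Real.arccos (inner ℝ c a : ℝ) / π) * V := by
    rw [real_inner_comm a c]
    exact pair_lemma hd a c ha hc
  have hpairY : volume Y = ENNReal.ofReal (Real.arccos (inner ℝ c b : ℝ) / π) * V := by
    rw [real_inner_comm b c]
    exact pair_lemma hd b c hb hc
  -- real versions
  set rV : ℝ := V.toReal with hrV
  have hrV0 : 0 < rV := ENNReal.toReal_pos hV0 hVfin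
  have hfinXY : volume (X ∩ Y) ≠ ⊤ :=
    ((measure_mono (inter_subset_left.trans hXsub)).trans_lt measure_ball_lt_top).ne
  have hfinXdY : volume (X \ Y) ≠ ⊤ :=
    ((measure_mono ((diff_subset).trans hXsub)).trans_lt measure_ball_lt_top).ne
  have hfinYdX : volume (Y \ X) ≠ ⊤ :=
    ((measure_mono ((diff_subset).trans hYsub)).trans_lt measure_ball_lt_top).ne
  set rXY : ℝ := (volume (X ∩ Y)).toReal
  set rXdY : ℝ := (volume (X \ Y)).toReal
  set rYdX : ℝ := (volume (Y \ X)).toReal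
  have hrD : (volume D).toReal = rXdY + rYdX := by
    rw [hvolD, ENNReal.toReal_add hfinXdY hfinYdX]
  have hrX : rXY + rXdY = (volume X).toReal := by
    rw [← ENNReal.toReal_add hfinXY hfinXdY, hvolX]
  have hrY : rXY + rYdX = (volume Y).toReal := by
    rw [← ENNReal.toReal_add (hXY ▸ hfinXY) hfinYdX, hXY, hvolY]
  have hargnn : ∀ x y : (EuclideanSpace ℝ (Fin d)), 0 ≤ Real.arccos (inner ℝ x y : ℝ) / π :=
    fun x y => div_nonneg (Real.arccos_nonneg _) hp.le
  have hrpD : (volume D).toReal = Real.arccos (inner ℝ a b : ℝ) / π * rV := by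
    rw [hpairD, ENNReal.toReal_mul, ENNReal.toReal_ofReal (hargnn a b)]
  have hrpX : (volume X).toReal = Real.arccos (inner ℝ c a : ℝ) / π * rV := by
    rw [hpairX, ENNReal.toReal_mul, ENNReal.toReal_ofReal (hargnn c a)]
  have hrpY : (volume Y).toReal = Real.arccos (inner ℝ c b : ℝ) / π * rV := by
    rw [hpairY, ENNReal.toReal_mul, ENNReal.toReal_ofReal (hargnn c b)]
  have hrM : (volume M).toReal
      = (Real.arccos (inner ℝ a b : ℝ) - Real.arccos (inner ℝ c a : ℝ)
        + Real.arccos (inner ℝ c b : ℝ)) / (2 * π) * rV := by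
    rw [hMeq]
    have h2 : rYdX = ((volume D).toReal - (volume X).toReal + (volume Y).toReal) / 2 := by
      rw [hrD, ← hrX, ← hrY]; ring
    show rYdX = _
    rw [h2, hrpD, hrpX, hrpY]
    field_simp
  have hMfin : volume M ≠ ⊤ :=
    ((measure_mono hMsub).trans_lt measure_ball_lt_top).ne
  -- relate sphere measure to solid measure
  have hsmul : (Ioo (0:ℝ) 1) • ((↑) '' S : Set (EuclideanSpace ℝ (Fin d))) = M \ {0} := by
    ext x
    constructor
    · intro hx
      rw [Set.mem_smul] at hx
      obtain ⟨r, hr, y, hy, hxy⟩ := hx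
      obtain ⟨ry, hry, rfl⟩ := hy
      subst hxy
      have hn : ‖(ry : (EuclideanSpace ℝ (Fin d)))‖ = 1 := mem_sphere_zero_iff_norm.1 ry.2
      have hiff : ∀ w : (EuclideanSpace ℝ (Fin d)), (0 ≤ (inner ℝ w (r • (ry : (EuclideanSpace ℝ (Fin d)))) : ℝ) ↔ 0 ≤ (inner ℝ w (ry : (EuclideanSpace ℝ (Fin d))) : ℝ)) := by
        intro w
        rw [real_inner_smul_right]
        exact mul_nonneg_iff_of_pos_left hr.1
      refine ⟨⟨?_, ?_, ?_⟩, ?_⟩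
      · rw [norm_smul, hn, Real.norm_eq_abs, abs_of_pos hr.1, mul_one]
        exact hr.2
      · rw [hiff a, hiff c]; exact hry.1
      · rw [hiff b, hiff c]; exact hry.2
      · intro h0
        have : ‖r • (ry : (EuclideanSpace ℝ (Fin d)))‖ = 0 := by rw [mem_singleton_iff.1 h0, norm_zero]
        rw [norm_smul, hn, Real.norm_eq_abs, abs_of_pos hr.1, mul_one] at this
        exact hr.1.ne' this
    · rintro ⟨⟨hx1, hx2, hx3⟩, hx0⟩
      rw [Set.mem_smul]
      have hxne : x ≠ 0 := fun h => hx0 (mem_singleton_iff.2 h)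
      have hn0 : 0 < ‖x‖ := norm_pos_iff.2 hxne
      have hmemsph : ‖x‖⁻¹ • x ∈ sphere (0 : (EuclideanSpace ℝ (Fin d))) 1 := by
        rw [mem_sphere_zero_iff_norm, norm_smul, Real.norm_eq_abs, abs_of_pos (inv_pos.2 hn0),
          inv_mul_cancel₀ hn0.ne']
      have hiff : ∀ w : (EuclideanSpace ℝ (Fin d)), (0 ≤ (inner ℝ w (‖x‖⁻¹ • x) : ℝ) ↔ 0 ≤ (inner ℝ w x : ℝ)) := by
        intro w
        rw [real_inner_smul_right]
        exact mul_nonneg_iff_of_pos_left (inv_pos.2 hn0)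
      refine ⟨‖x‖, ⟨hn0, hx1⟩, ‖x‖⁻¹ • x, ⟨⟨‖x‖⁻¹ • x, hmemsph⟩, ⟨?_, ?_⟩, rfl⟩, ?_⟩
      · rw [hiff a, hiff c]; exact hx2
      · rw [hiff b, hiff c]; exact hx3
      · rw [smul_smul, mul_inv_cancel₀ hn0.ne', one_smul]
  have hvolsmul : volume ((Ioo (0:ℝ) 1) • ((↑) '' S : Set (EuclideanSpace ℝ (Fin d)))) = volume M := by
    rw [hsmul]
    haveI : Nonempty (Fin d) := ⟨⟨0, by omega⟩⟩
    exact measure_diff_null (measure_singleton 0)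
  -- compute the uniform sphere measure
  have hdim : (Module.finrank ℝ (EuclideanSpace ℝ (Fin d)) : ENNReal) = (d : ENNReal) := by
    norm_cast
    exact finrank_euclideanSpace_fin
  have hd0 : (d : ENNReal) ≠ 0 := by
    simp only [ne_eq, Nat.cast_eq_zero]
    omega
  have hdtop : (d : ENNReal) ≠ ⊤ := ENNReal.natCast_ne_top d
  rw [uniformSphere, Measure.smul_apply, smul_eq_mul,
    Measure.toSphere_apply' _ hSmeas, Measure.toSphere_apply_univ, hvolsmul, hdim,
    ENNReal.mul_inv (Or.inl hd0) (Or.inl hdtop)]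
  have hcalc : (d : ENNReal)⁻¹ * (volume (ball (0 : EuclideanSpace ℝ (Fin d)) 1))⁻¹ *
      ((d : ENNReal) * volume M) = V⁻¹ * volume M := by
    calc (d : ENNReal)⁻¹ * (volume (ball (0 : EuclideanSpace ℝ (Fin d)) 1))⁻¹ *
        ((d : ENNReal) * volume M)
        = ((d : ENNReal)⁻¹ * (d : ENNReal)) * ((volume (ball (0 : EuclideanSpace ℝ (Fin d)) 1))⁻¹ * volume M) := by
          ring
      _ = V⁻¹ * volume M := by rw [ENNReal.inv_mul_cancel hd0 hdtop, one_mul, hV]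
  rw [hcalc]
  -- final arithmetic
  have hVeq : V = ENNReal.ofReal rV := (ENNReal.ofReal_toReal hVfin).symm
  have hMeq2 : volume M = ENNReal.ofReal ((volume M).toReal) :=
    (ENNReal.ofReal_toReal hMfin).symm
  rw [hVeq, hMeq2, ← ENNReal.ofReal_inv_of_pos hrV0, ← ENNReal.ofReal_mul (by positivity)]
  rw [hrM]
  congr 1
  show rV⁻¹ * ((angleOf a b - angleOf c a + angleOf c b) / (2 * π) * rV) = _
  field_simp
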